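/- Let q be a prime power and A = F_q[T]. Let Γ be a finite-index subgroup of SL₂(A) and suppose there is a nonzero polynomial f ∈ A of degree at most 1 such that the ideal (f) is contained in the quasi-level ql(Γ) (so the level of Γ contains (f)). Then Γ is a congruence subgroup. -/

import Mathlib

open Matrix Polynomial

/-- The unipotent matrix `[[1,a],[0,1]]` as an element of `GL₂(R)`. -/
def unipGL {R : Type*} [CommRing R] (a : R) : GL (Fin 2) R :=
  ⟨!![1, a; 0, 1], !![1, -a; 0, 1],
    by simp [Matrix.mul_fin_two, Matrix.one_fin_two],
    by simp [Matrix.mul_fin_two, Matrix.one_fin_two]⟩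

/-- The quasi-level of a subgroup `Γ ≤ SL₂(R)`: the set of `a ∈ R` such that the unipotent
matrix `[[1,a],[0,1]]` lies in `g Γ g⁻¹` for every `g ∈ GL₂(R)`. -/
def quasiLevelSL {R : Type*} [CommRing R]
    (Γ : Subgroup (Matrix.SpecialLinearGroup (Fin 2) R)) : Set R :=
  {a : R | ∀ g : GL (Fin 2) R,
    g⁻¹ * unipGL a * g ∈ Γ.map Matrix.SpecialLinearGroup.toGL}

/-- A subgroup `Γ ≤ SL₂(R)` is a congruence subgroup if it contains the kernel of the
reduction map `SL₂(R) → SL₂(R/I)` for some nonzero ideal `I` of `R`. -/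
def IsCongruenceSubgroup {R : Type*} [CommRing R]
    (Γ : Subgroup (Matrix.SpecialLinearGroup (Fin 2) R)) : Prop :=
  ∃ I : Ideal R, I ≠ ⊥ ∧
    MonoidHom.ker (Matrix.SpecialLinearGroup.map (n := Fin 2) (Ideal.Quotient.mk I)) ≤ Γ

/-! ### Auxiliary material -/

section Aux

variable {R : Type*} [CommRing R]

/-- Upper unipotent element of `SL₂`. -/
def Umat (x : R) : Matrix.SpecialLinearGroup (Fin 2) R :=
  ⟨!![1, x; 0, 1], by simp [Matrix.det_fin_two_of]⟩

/-- The Weyl element `[[0,-1],[1,0]]` of `SL₂`. -/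
def Wmat : Matrix.SpecialLinearGroup (Fin 2) R :=
  ⟨!![0, -1; 1, 0], by simp [Matrix.det_fin_two_of]⟩

lemma Umat_zero : (Umat 0 : Matrix.SpecialLinearGroup (Fin 2) R) = 1 := by
  ext i j; fin_cases i <;> fin_cases j <;> simp [Umat]

lemma Umat_add (x y : R) : Umat (x + y) = Umat x * Umat y := by
  ext i j
  rw [Matrix.SpecialLinearGroup.coe_mul]
  simp only [Umat]
  fin_cases i <;> fin_cases j <;> simp [Matrix.mul_apply, Fin.sum_univ_two, add_comm]

lemma map_Umat {S : Type*} [CommRing S] (f : R →+* S) (x : R) :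
    Matrix.SpecialLinearGroup.map f (Umat x) = Umat (f x) := by
  ext i j
  rw [Matrix.SpecialLinearGroup.map_apply_coe]
  fin_cases i <;> fin_cases j <;>
    simp [Umat, Matrix.SpecialLinearGroup.map]

lemma map_Wmat {S : Type*} [CommRing S] (f : R →+* S) :
    Matrix.SpecialLinearGroup.map f (Wmat) = (Wmat : Matrix.SpecialLinearGroup (Fin 2) S) := by
  ext i j
  rw [Matrix.SpecialLinearGroup.map_apply_coe]
  fin_cases i <;> fin_cases j <;>
    simp [Wmat, Matrix.SpecialLinearGroup.map]

lemma toGL_Umat (x : R) : Matrix.SpecialLinearGroup.toGL (Umat x) = unipGL x := by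
  apply Units.ext
  rfl

lemma toGL_injective :
    Function.Injective
      (Matrix.SpecialLinearGroup.toGL :
        Matrix.SpecialLinearGroup (Fin 2) R → GL (Fin 2) R) := by
  intro x y h
  have : (x : Matrix (Fin 2) (Fin 2) R) = y := congrArg Units.val h
  exact Subtype.ext this

lemma Umat_mul_apply_one_zero (x : R) (M : Matrix.SpecialLinearGroup (Fin 2) R) :
    (Umat x * M : Matrix.SpecialLinearGroup (Fin 2) R) 1 0 = M 1 0 := by
  rw [Matrix.SpecialLinearGroup.coe_mul]
  simp [Umat, Matrix.mul_apply, Fin.sum_univ_two]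

lemma Umat_mul_apply_zero_zero (x : R) (M : Matrix.SpecialLinearGroup (Fin 2) R) :
    (Umat x * M : Matrix.SpecialLinearGroup (Fin 2) R) 0 0 = M 0 0 + x * M 1 0 := by
  rw [Matrix.SpecialLinearGroup.coe_mul]
  simp [Umat, Matrix.mul_apply, Fin.sum_univ_two]

lemma Wmat_mul_apply_one_zero (M : Matrix.SpecialLinearGroup (Fin 2) R) :
    (Wmat * M : Matrix.SpecialLinearGroup (Fin 2) R) 1 0 = M 0 0 := by
  rw [Matrix.SpecialLinearGroup.coe_mul]
  simp [Wmat, Matrix.mul_apply, Fin.sum_univ_two]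

lemma SL2_det (M : Matrix.SpecialLinearGroup (Fin 2) R) :
    M 0 0 * M 1 1 - M 0 1 * M 1 0 = 1 := by
  have := M.prop
  rwa [Matrix.det_fin_two] at this

end Aux

section FieldAux

variable {K : Type*} [Field K]

/-- The ring homomorphism `K[X] → K[X]` sending a polynomial `p` to the constant
polynomial `p(a)`. -/
noncomputable def evalC (a : K) : Polynomial K →+* Polynomial K :=
  (Polynomial.C : K →+* Polynomial K).comp (Polynomial.evalRingHom a)

/-- The generating set: matrices fixed by `evalC a`, together with unipotents
whose off-diagonal entry vanishes at `a`. -/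
noncomputable def genSet (a : K) : Set (Matrix.SpecialLinearGroup (Fin 2) (Polynomial K)) :=
  {s | Matrix.SpecialLinearGroup.map (evalC a) s = s} ∪
    Umat '' {y : Polynomial K | y.eval a = 0}

lemma Umat_mem_closure_genSet (a : K) (x : Polynomial K) :
    Umat x ∈ Subgroup.closure (genSet a) := by
  have hx : x = (x - Polynomial.C (x.eval a)) + Polynomial.C (x.eval a) := by ring
  rw [hx, Umat_add]
  apply mul_mem
  · apply Subgroup.subset_closure
    exact Or.inr ⟨_, by simp, rfl⟩
  · apply Subgroup.subset_closure
    refine Or.inl ?_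
    show Matrix.SpecialLinearGroup.map (evalC a) (Umat (Polynomial.C (x.eval a))) = _
    rw [map_Umat]
    congr 1
    simp [evalC]

lemma Wmat_mem_closure_genSet (a : K) :
    (Wmat : Matrix.SpecialLinearGroup (Fin 2) (Polynomial K)) ∈
      Subgroup.closure (genSet a) := by
  apply Subgroup.subset_closure
  left
  exact map_Wmat _

/-- A matrix whose entries are all fixed by `evalC a` lies in the closure. -/
lemma fixed_mem_closure_genSet (a : K) (M : Matrix.SpecialLinearGroup (Fin 2) (Polynomial K))
    (h : ∀ i j, evalC a (M i j) = M i j) : M ∈ Subgroup.closure (genSet a) := by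
  apply Subgroup.subset_closure
  left
  ext i j
  have : (Matrix.SpecialLinearGroup.map (evalC a) M :
      Matrix (Fin 2) (Fin 2) (Polynomial K)) i j = evalC a (M i j) := by
    simp [Matrix.SpecialLinearGroup.map_apply_coe]
  rw [this, h]

lemma evalC_unit (a : K) {u : Polynomial K} (hu : IsUnit u) : evalC a u = u := by
  obtain ⟨r, -, rfl⟩ := Polynomial.isUnit_iff.mp hu
  simp [evalC]

/-- Base case: a matrix with lower-left entry `0` lies in the closure. -/
lemma triangular_mem_closure_genSet (a : K)
    (M : Matrix.SpecialLinearGroup (Fin 2) (Polynomial K)) (hc : M 1 0 = 0) :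
    M ∈ Subgroup.closure (genSet a) := by
  have hdet := SL2_det M
  rw [hc, mul_zero, sub_zero] at hdet
  -- M = D * Umat (M 1 1 * M 0 1), D = diag (M 0 0, M 1 1)
  have hD : Matrix.det !![M 0 0, 0; 0, M 1 1] = 1 := by
    simp [Matrix.det_fin_two_of, hdet]
  set D : Matrix.SpecialLinearGroup (Fin 2) (Polynomial K) := ⟨_, hD⟩ with hDdef
  have h01 : M 0 0 * (M 1 1 * M 0 1) = M 0 1 := by
    rw [← mul_assoc, hdet, one_mul]
  have hMD : M = D * Umat (M 1 1 * M 0 1) := by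
    apply Subtype.ext
    rw [Matrix.SpecialLinearGroup.coe_mul]
    show (M : Matrix (Fin 2) (Fin 2) (Polynomial K)) =
      !![M 0 0, 0; 0, M 1 1] * !![1, M 1 1 * M 0 1; 0, 1]
    conv_lhs => rw [Matrix.eta_fin_two (M : Matrix (Fin 2) (Fin 2) (Polynomial K))]
    rw [hc, Matrix.mul_fin_two]
    simp [h01]
  rw [hMD]
  refine mul_mem ?_ (Umat_mem_closure_genSet a _)
  apply fixed_mem_closure_genSet
  intro i j
  have hu : IsUnit (M 0 0) := IsUnit.of_mul_eq_one _ hdet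
  have hv : IsUnit (M 1 1) := IsUnit.of_mul_eq_one _ (by rw [mul_comm]; exact hdet)
  fin_cases i <;> fin_cases j <;>
    simp [hDdef, evalC_unit a hu, evalC_unit a hv, map_zero]

/-- Main generation lemma: every element of `SL₂(K[X])` lies in the subgroup generated
by `evalC a`-fixed matrices and unipotents vanishing at `a`. -/
lemma gen_aux (a : K) : ∀ (n : ℕ) (M : Matrix.SpecialLinearGroup (Fin 2) (Polynomial K)),
    (M 1 0).natDegree < n → M ∈ Subgroup.closure (genSet a) := by
  intro n
  induction n with
  | zero => exact fun M h => absurd h (Nat.not_lt_zero _)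
  | succ n ih =>
    intro M h
    by_cases hc : M 1 0 = 0
    · exact triangular_mem_closure_genSet a M hc
    · have hm : ((M 1 0) * Polynomial.C (M 1 0).leadingCoeff⁻¹).Monic :=
        Polynomial.monic_mul_leadingCoeff_inv hc
      obtain ⟨q, r, heq, hdeg⟩ : ∃ q r : Polynomial K,
          M 0 0 = r + (M 1 0) * q ∧ r.degree < (M 1 0).degree := by
        refine ⟨Polynomial.C (M 1 0).leadingCoeff⁻¹ *
            ((M 0 0) /ₘ ((M 1 0) * Polynomial.C (M 1 0).leadingCoeff⁻¹)),
          (M 0 0) %ₘ ((M 1 0) * Polynomial.C (M 1 0).leadingCoeff⁻¹), ?_, ?_⟩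
        · have h2 := Polynomial.modByMonic_add_div (M 0 0) ((M 1 0) * Polynomial.C (M 1 0).leadingCoeff⁻¹)
          conv_lhs => rw [← h2]
          ring
        · have h3 := Polynomial.degree_modByMonic_lt (M 0 0) hm
          rwa [Polynomial.degree_mul_leadingCoeff_inv _ hc] at h3
      have h10 : (Wmat * (Umat (-q) * M) :
          Matrix.SpecialLinearGroup (Fin 2) (Polynomial K)) 1 0 = r := by
        rw [Wmat_mul_apply_one_zero, Umat_mul_apply_zero_zero]
        linear_combination heq
      have hM'mem : Wmat * (Umat (-q) * M) ∈ Subgroup.closure (genSet a) := by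
        by_cases hr0 : r = 0
        · exact triangular_mem_closure_genSet a _ (by rw [h10, hr0])
        · apply ih
          rw [h10]
          exact lt_of_lt_of_le (Polynomial.natDegree_lt_natDegree hr0 hdeg)
            (Nat.lt_succ_iff.mp h)
      have hMeq : M = (Umat (-q))⁻¹ * (Wmat⁻¹ * (Wmat * (Umat (-q) * M))) := by group
      rw [hMeq]
      exact mul_mem (inv_mem (Umat_mem_closure_genSet a _))
        (mul_mem (inv_mem (Wmat_mem_closure_genSet a)) hM'mem)

lemma gen_all (a : K) (M : Matrix.SpecialLinearGroup (Fin 2) (Polynomial K)) :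
    M ∈ Subgroup.closure (genSet a) :=
  gen_aux a ((M 1 0).natDegree + 1) M (Nat.lt_succ_self _)

end FieldAux

theorem congruence_of_level_deg_le_one (Fq : Type*) [Field Fq] [Fintype Fq]
    (Γ : Subgroup (Matrix.SpecialLinearGroup (Fin 2) (Polynomial Fq)))
    (hΓ : Γ.FiniteIndex) (f : Polynomial Fq) (hf0 : f ≠ 0) (hfd : f.degree ≤ 1)
    (hf : (Ideal.span {f} : Ideal (Polynomial Fq)) ≠ ⊥ ∧
      ((Ideal.span {f} : Ideal (Polynomial Fq)) : Set (Polynomial Fq)) ⊆ quasiLevelSL Γ) :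
    IsCongruenceSubgroup Γ := by
  classical
  -- Step 1: find `a` with `X - C a ∈ (f)`.
  obtain ⟨a, ha⟩ : ∃ a : Fq, (X - C a : Polynomial Fq) ∈ Ideal.span {f} := by
    by_cases h1 : f.degree = 1
    · obtain ⟨c1, c0, hc1, hfeq⟩ : ∃ c1 c0 : Fq, c1 ≠ 0 ∧ f = C c1 * X + C c0 :=
        ⟨f.coeff 1, f.coeff 0, Polynomial.coeff_ne_zero_of_eq_degree h1,
          Polynomial.eq_X_add_C_of_degree_le_one hfd⟩
      refine ⟨-(c1⁻¹ * c0), ?_⟩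
      rw [Ideal.mem_span_singleton]
      refine ⟨C c1⁻¹, ?_⟩
      have hC : (C c1 : Polynomial Fq) * C c1⁻¹ = 1 := by
        rw [← C_mul, mul_inv_cancel₀ hc1, C_1]
      rw [hfeq]
      simp only [map_neg, _root_.map_mul]
      linear_combination (-X : Polynomial Fq) * hC
    · have hdeg0 : f.degree = 0 := by
        have hlt : f.degree < 1 := lt_of_le_of_ne hfd h1
        have hge : 0 ≤ f.degree := Polynomial.zero_le_degree_iff.mpr hf0
        have hn : f.natDegree = 0 := by
          by_contra hn
          have : 1 ≤ f.degree := by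
            rw [Polynomial.degree_eq_natDegree hf0]
            exact_mod_cast Nat.one_le_iff_ne_zero.mpr hn
          exact absurd hlt (not_lt.mpr this)
        rw [Polynomial.degree_eq_natDegree hf0, hn]; rfl
      have hu : IsUnit f := Polynomial.isUnit_iff_degree_eq_zero.mpr hdeg0
      refine ⟨0, ?_⟩
      rw [Ideal.span_singleton_eq_top.mpr hu]
      trivial
  -- Step 2: the normal closure of the level-`(X - C a)` unipotents is contained in `Γ`.
  set N : Subgroup (Matrix.SpecialLinearGroup (Fin 2) (Polynomial Fq)) :=
    Subgroup.normalClosure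
      (Umat '' ((Ideal.span {X - C a} : Ideal (Polynomial Fq)) : Set (Polynomial Fq))) with hNdef
  have hNΓ : N ≤ Γ := by
    rw [hNdef]
    show Subgroup.closure _ ≤ Γ
    refine (Subgroup.closure_le _).mpr ?_
    intro x hx
    obtain ⟨s, hs, hconj⟩ := Group.mem_conjugatesOfSet_iff.mp hx
    obtain ⟨y, hy, rfl⟩ := hs
    obtain ⟨γ, hγ⟩ := isConj_iff.mp hconj
    have hyf : y ∈ (Ideal.span {f} : Ideal (Polynomial Fq)) :=
      Ideal.span_singleton_le_span_singleton.mpr (Ideal.mem_span_singleton.mp ha) hy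
    have hq := hf.2 hyf ((Matrix.SpecialLinearGroup.toGL γ)⁻¹)
    rw [inv_inv] at hq
    obtain ⟨δ, hδΓ, hδ⟩ := Subgroup.mem_map.mp hq
    have heq : Matrix.SpecialLinearGroup.toGL (γ * Umat y * γ⁻¹) =
        Matrix.SpecialLinearGroup.toGL δ := by
      rw [_root_.map_mul, _root_.map_mul, _root_.map_inv, toGL_Umat, hδ]
    have hx' : γ * Umat y * γ⁻¹ = δ := toGL_injective heq
    rw [← hγ, hx']
    exact hδΓ
  -- Step 3: for every `M`, `M * (φ M)⁻¹ ∈ N`.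
  have key : ∀ M : Matrix.SpecialLinearGroup (Fin 2) (Polynomial Fq),
      M * (Matrix.SpecialLinearGroup.map (evalC a) M)⁻¹ ∈ N := by
    intro M
    have hM := gen_all a M
    refine Subgroup.closure_induction
      (p := fun g _ => g * (Matrix.SpecialLinearGroup.map (evalC a) g)⁻¹ ∈ N)
      ?_ ?_ ?_ ?_ hM
    · intro x hx
      rcases hx with hfix | ⟨y, hy, rfl⟩
      · rw [hfix]
        simp only [mul_inv_cancel]
        exact one_mem N
      · have hφU : Matrix.SpecialLinearGroup.map (evalC a) (Umat y) = 1 := by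
          rw [map_Umat]
          have hy' : Polynomial.eval a y = 0 := hy
          have hz : evalC a y = 0 := by simp [evalC, hy']
          rw [hz, Umat_zero]
        rw [hφU, inv_one, mul_one]
        apply Subgroup.subset_normalClosure
        refine ⟨y, ?_, rfl⟩
        show y ∈ (Ideal.span {X - C a} : Ideal (Polynomial Fq))
        rw [← Polynomial.ker_evalRingHom a]
        exact hy
    · simp only [_root_.map_one, inv_one, mul_one]
      exact one_mem N
    · intro x y _ _ px py
      have hrw : (x * y) * (Matrix.SpecialLinearGroup.map (evalC a) (x * y))⁻¹ =
          x * (y * (Matrix.SpecialLinearGroup.map (evalC a) y)⁻¹) * x⁻¹ *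
            (x * (Matrix.SpecialLinearGroup.map (evalC a) x)⁻¹) := by
        rw [_root_.map_mul]; group
      rw [hrw]
      exact mul_mem (Subgroup.Normal.conj_mem Subgroup.normalClosure_normal _ py x) px
    · intro x _ px
      have hrw : x⁻¹ * (Matrix.SpecialLinearGroup.map (evalC a) x⁻¹)⁻¹ =
          x⁻¹ * (x * (Matrix.SpecialLinearGroup.map (evalC a) x)⁻¹)⁻¹ * (x⁻¹)⁻¹ := by
        rw [_root_.map_inv]; group
      rw [hrw]
      exact Subgroup.Normal.conj_mem Subgroup.normalClosure_normal _ (inv_mem px) x⁻¹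
  -- Step 4: conclude.
  refine ⟨Ideal.span {X - C a}, ?_, ?_⟩
  · rw [Ne, Ideal.span_singleton_eq_bot]
    exact Polynomial.X_sub_C_ne_zero a
  · intro M hM
    have hM' := MonoidHom.mem_ker.mp hM
    have hent : ∀ i j, Ideal.Quotient.mk (Ideal.span {X - C a}) (M i j) =
        Ideal.Quotient.mk (Ideal.span {X - C a}) ((1 : Matrix (Fin 2) (Fin 2) (Polynomial Fq)) i j) := by
      intro i j
      have h2 := congrArg Subtype.val hM'
      have h3 := congrFun (congrFun h2 i) j
      rw [Matrix.SpecialLinearGroup.map_apply_coe] at h3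
      simpa [Matrix.one_apply, apply_ite] using h3
    have hφ : Matrix.SpecialLinearGroup.map (evalC a) M = 1 := by
      apply Subtype.ext
      apply Matrix.ext
      intro i j
      have h2 : M i j - (1 : Matrix (Fin 2) (Fin 2) (Polynomial Fq)) i j ∈
          Ideal.span {X - C a} :=
        Ideal.Quotient.eq.mp (hent i j)
      have h3 : Polynomial.eval a (M i j - (1 : Matrix (Fin 2) (Fin 2) (Polynomial Fq)) i j) = 0 := by
        have h4 : M i j - (1 : Matrix (Fin 2) (Fin 2) (Polynomial Fq)) i j ∈
            RingHom.ker (Polynomial.evalRingHom a) := by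
          rw [Polynomial.ker_evalRingHom a]; exact h2
        exact RingHom.mem_ker.mp h4
      rw [Polynomial.eval_sub, sub_eq_zero] at h3
      have h5 : (Matrix.SpecialLinearGroup.map (evalC a) M :
          Matrix (Fin 2) (Fin 2) (Polynomial Fq)) i j = evalC a (M i j) := by
        simp [Matrix.SpecialLinearGroup.map_apply_coe]
      rw [h5]
      show evalC a (M i j) = ((1 : Matrix.SpecialLinearGroup (Fin 2) (Polynomial Fq)) :
        Matrix (Fin 2) (Fin 2) (Polynomial Fq)) i j
      rw [Matrix.SpecialLinearGroup.coe_one]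
      have h6 : evalC a (M i j) = C (Polynomial.eval a
          ((1 : Matrix (Fin 2) (Fin 2) (Polynomial Fq)) i j)) := by
        simp [evalC, h3]
      rw [h6]
      by_cases hij : i = j <;> simp [Matrix.one_apply, hij]
    have hk := key M
    rw [hφ, inv_one, mul_one] at hk
    exact hNΓ hk
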